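/- Let A be a bounded linear operator on ℋ = ℝ × H with block data (c, u, v, B). Then A preserves the Lorentz form if and only if the following three relations hold: B*∘B = id_H + v⊗v, ‖u‖² = c² − 1, and B* u = c·v. -/
import Mathlib

open scoped RealInnerProductSpace

noncomputable section

variable {H : Type*} [NormedAddCommGroup H] [InnerProductSpace ℝ H]

/-- The Lorentz form on `ℝ × H`: `⟨(s,x),(t,y)⟩_L = ⟪x,y⟫ - s·t`. -/
def lorentzInner (z w : ℝ × H) : ℝ := ⟪z.2, w.2⟫ - z.1 * w.1

/-- The rank-one operator `a ⊗ b : x ↦ ⟪b,x⟫ • a`. -/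
def rankOne (a b : H) : H →L[ℝ] H := (innerSL ℝ b).smulRight a

/-- A bounded operator `A` on `ℝ × H` with block data `(c,u,v,B)` preserves the Lorentz form
iff `B* ∘ B = id + v ⊗ v`, `‖u‖² = c² - 1` and `B* u = c • v`. -/
theorem preserves_lorentz_iff_block_relations [CompleteSpace H]
    (A : (ℝ × H) →L[ℝ] (ℝ × H)) (c : ℝ) (u v : H) (B : H →L[ℝ] H)
    (hblock : ∀ (s : ℝ) (x : H), A (s, x) = (c * s + ⟪v, x⟫, s • u + B x)) :
    (∀ z w : ℝ × H, lorentzInner (A z) (A w) = lorentzInner z w) ↔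
      (ContinuousLinearMap.adjoint B ∘L B = ContinuousLinearMap.id ℝ H + rankOne v v ∧
        ‖u‖ ^ 2 = c ^ 2 - 1 ∧
        ContinuousLinearMap.adjoint B u = c • v) := by
  constructor
  · intro hpres
    have key : ∀ (s t : ℝ) (x y : H),
        ⟪s • u + B x, t • u + B y⟫ - (c * s + ⟪v, x⟫) * (c * t + ⟪v, y⟫)
          = ⟪x, y⟫ - s * t := by
      intro s t x y
      have := hpres (s, x) (t, y)
      rw [hblock s x, hblock t y] at this
      simpa [lorentzInner] using this
    have h2 : ‖u‖ ^ 2 = c ^ 2 - 1 := by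
      have := key 1 1 0 0
      simp [real_inner_self_eq_norm_sq] at this
      nlinarith [this]
    have h3 : ContinuousLinearMap.adjoint B u = c • v := by
      apply ext_inner_right ℝ
      intro y
      have := key 1 0 0 y
      simp [inner_add_left, inner_smul_left] at this
      rw [ContinuousLinearMap.adjoint_inner_left, real_inner_smul_left]
      linarith [this]
    refine ⟨?_, h2, h3⟩
    · ext x
      apply ext_inner_right ℝ
      intro y
      have := key 0 0 x y
      simp [inner_add_left, inner_add_right] at this
      simp only [ContinuousLinearMap.coe_comp', Function.comp_apply,
        ContinuousLinearMap.adjoint_inner_left, ContinuousLinearMap.add_apply,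
        ContinuousLinearMap.coe_id', id_eq, rankOne, ContinuousLinearMap.smulRight_apply,
        innerSL_apply_apply, inner_add_left, real_inner_smul_left]
      linarith [this]
  · rintro ⟨h1, h2, h3⟩
    intro z w
    obtain ⟨s, x⟩ := z
    obtain ⟨t, y⟩ := w
    rw [hblock s x, hblock t y]
    have hBB : ⟪B x, B y⟫ = ⟪x, y⟫ + ⟪v, x⟫ * ⟪v, y⟫ := by
      have := congrArg (fun T => ⟪(T : H →L[ℝ] H) x, y⟫) h1
      simp only [ContinuousLinearMap.coe_comp', Function.comp_apply,
        ContinuousLinearMap.adjoint_inner_left, ContinuousLinearMap.add_apply,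
        ContinuousLinearMap.coe_id', id_eq, rankOne, ContinuousLinearMap.smulRight_apply,
        innerSL_apply_apply, inner_add_left, real_inner_smul_left] at this
      rw [this, mul_comm]
    have huBy : ⟪u, B y⟫ = c * ⟪v, y⟫ := by
      rw [← ContinuousLinearMap.adjoint_inner_left, h3, real_inner_smul_left]
    have hBxu : ⟪B x, u⟫ = c * ⟪v, x⟫ := by
      rw [real_inner_comm, ← ContinuousLinearMap.adjoint_inner_left, h3,
        real_inner_smul_left]
    have huu : ⟪u, u⟫ = c ^ 2 - 1 := by
      rw [real_inner_self_eq_norm_sq, h2]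
    simp only [lorentzInner, inner_add_left, inner_add_right, real_inner_smul_left,
      real_inner_smul_right, hBB, huBy, hBxu, huu]
    ring
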